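/- Let R be a Hermitian quartic form on C^2, i.e. a function R(X,Ȳ,Z,W̄) complex-linear in X,Z and conjugate-linear in Y,W, satisfying the Chern curvature symmetry R(X,Ȳ,Z,W̄) = conj(R(Y,X̄,W,Z̄)). Let Ric(X,Ȳ) = R(e₁,ē₁,X,Ȳ) + R(e₂,ē₂,X,Ȳ) for the standard basis e₁,e₂ (first Ricci contraction). Fix α,β ∈ ℝ with β ≠ 0 and c ∈ ℝ. Suppose that for every unit vector Z ∈ C², α·Ric(Z,Z̄) + β·R(Z,Z̄,Z,Z̄) = c. Then R(e₁,ē₂,e₁,ē₂) = 0. -/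
import Mathlib


open BigOperators Finset

noncomputable section

namespace Stmt0

/-- Evaluation of a quartic form on `ℂ^n` given by its components:
complex-linear in slots 1,3, conjugate-linear in slots 2,4. -/
def eval {n : ℕ} (R : Fin n → Fin n → Fin n → Fin n → ℂ) (X Y Z W : Fin n → ℂ) : ℂ :=
  ∑ i, ∑ j, ∑ k, ∑ l,
    X i * (starRingEnd ℂ) (Y j) * Z k * (starRingEnd ℂ) (W l) * R i j k l

/-- First Ricci contraction: `Ric(X, Ȳ) = ∑ᵢ R(eᵢ, ēᵢ, X, Ȳ)`. -/
def ric {n : ℕ} (R : Fin n → Fin n → Fin n → Fin n → ℂ) (X Y : Fin n → ℂ) : ℂ :=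
  ∑ i, ∑ k, ∑ l, X k * (starRingEnd ℂ) (Y l) * R i i k l

/-- If a Hermitian quartic form on `ℂ²` has constant mixed curvature
`α·Ric(Z,Z̄) + β·R(Z,Z̄,Z,Z̄) = c` on unit vectors (with `β ≠ 0`),
then `R(e₁,ē₂,e₁,ē₂) = 0`. -/
theorem constant_mixed_curvature_W1_vanishes
    (R : Fin 2 → Fin 2 → Fin 2 → Fin 2 → ℂ)
    (hherm : ∀ i j k l, R i j k l = (starRingEnd ℂ) (R j i l k))
    (α β c : ℝ) (hβ : β ≠ 0)
    (hconst : ∀ Z : Fin 2 → ℂ, (∑ i, Complex.normSq (Z i)) = 1 →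
      (α : ℂ) * ric R Z Z + (β : ℂ) * eval R Z Z Z Z = (c : ℂ)) :
    R 0 1 0 1 = 0 := by
  have key : ∀ u : ℂ, Complex.normSq u = 1 →
      (α : ℂ) * ric R ![3/5, 4/5*u] ![3/5, 4/5*u]
        + (β : ℂ) * eval R ![3/5, 4/5*u] ![3/5, 4/5*u] ![3/5, 4/5*u] ![3/5, 4/5*u] = (c : ℂ) := by
    intro u hu
    apply hconst
    simp [Fin.sum_univ_two, Complex.normSq_mul, hu]
    norm_num
  have hw : Complex.normSq ((3+4*Complex.I)/5) = 1 := by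
    simp [Complex.normSq_apply]
    norm_num
  have h0 := key 1 (by simp)
  have h1 := key Complex.I (by simp)
  have h2 := key (-1) (by simp)
  have h3 := key (-Complex.I) (by simp)
  have h4 := key ((3+4*Complex.I)/5) hw
  have h5 := key (Complex.I * ((3+4*Complex.I)/5)) (by simp [Complex.normSq_mul, hw])
  have h6 := key (-((3+4*Complex.I)/5)) (by simp [hw])
  have h7 := key (-(Complex.I * ((3+4*Complex.I)/5))) (by simp [Complex.normSq_mul, hw])
  simp only [eval, ric, Fin.sum_univ_two, Matrix.cons_val_zero, Matrix.cons_val_one,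
    Matrix.head_cons, map_mul, map_div₀, map_ofNat, map_one, Complex.conj_I, map_neg,
    map_add] at h0 h1 h2 h3 h4 h5 h6 h7
  have hβ' : (β : ℂ) ≠ 0 := by exact_mod_cast hβ
  have key2 : (β:ℂ) * R 0 1 0 1 = 0 := by
    linear_combination (norm := (ring_nf; simp only [Complex.I_sq, show Complex.I^3 = -Complex.I by simp [pow_succ, Complex.I_mul_I], show Complex.I^4 = 1 by simp [pow_succ, Complex.I_mul_I], show Complex.I^5 = Complex.I by simp [pow_succ, Complex.I_mul_I], show Complex.I^7 = -Complex.I by simp [pow_succ, Complex.I_mul_I], show Complex.I^9 = Complex.I by simp [pow_succ, Complex.I_mul_I]]; ring_nf)) (625/576 : ℂ) *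
      ((24+7*Complex.I)/48 * (h0 - h1 + h2 - h3) + (25*Complex.I/48) * (h4 - h5 + h6 - h7))
  exact (mul_eq_zero.mp key2).resolve_left hβ'


end Stmt0
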